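/- Fix α ∈ ℤ^n and m ∈ ℕ with m - ||α||₁ = 2r ≥ 0 even. The complex vector space of harmonic polynomials on ℝ^{2n} of the form Q(|z₁|²,...,|z_n|²) ∏_j z_{σ(j)}^{|α_j|} (with Q homogeneous of degree r, and σ(j) choosing z_j or z̄_j according to the sign of α_j) has dimension binomial(r+n-2, n-2). -/

import Mathlib

open MvPolynomial

/-- The Laplacian `∑_j ∂_{z_j} ∂_{z̄_j}` in complex coordinates on `ℝ^{2n} ≅ ℂⁿ`
(variables `inl j ↦ z_j`, `inr j ↦ z̄_j`). -/
noncomputable def cxLaplacian (n : ℕ) :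
    MvPolynomial (Fin n ⊕ Fin n) ℂ →ₗ[ℂ] MvPolynomial (Fin n ⊕ Fin n) ℂ :=
  ∑ j : Fin n, (pderiv (Sum.inl j)).toLinearMap ∘ₗ (pderiv (Sum.inr j)).toLinearMap

/-- The monomial `∏_j z_j^{max(-α_j,0)} z̄_j^{max(α_j,0)}` associated with `α ∈ ℤⁿ`. -/
noncomputable def alphaMonomial (n : ℕ) (α : Fin n → ℤ) :
    MvPolynomial (Fin n ⊕ Fin n) ℂ :=
  ∏ j : Fin n, X (Sum.inl j) ^ (max (-α j) 0).toNat * X (Sum.inr j) ^ (max (α j) 0).toNat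

/-- The linear map `Q ↦ Q(|z₁|²,…,|zₙ|²) · ∏_j z_{σ(j)}^{|α_j|}`. -/
noncomputable def alphaMap (n : ℕ) (α : Fin n → ℤ) :
    MvPolynomial (Fin n) ℂ →ₗ[ℂ] MvPolynomial (Fin n ⊕ Fin n) ℂ :=
  (LinearMap.mulRight ℂ (alphaMonomial n α)) ∘ₗ
    (aeval (fun j : Fin n => X (Sum.inl j) * X (Sum.inr j))).toLinearMap


namespace DimHarmonicsAux

variable {n : ℕ} {α : Fin n → ℤ}


variable {n : ℕ} {α : Fin n → ℤ}

/-- exponent of z_j -/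
def aaa (α : Fin n → ℤ) (j : Fin n) : ℕ := (max (-α j) 0).toNat
/-- exponent of z̄_j -/
def bbb (α : Fin n → ℤ) (j : Fin n) : ℕ := (max (α j) 0).toNat

lemma aaa_mul_bbb (j : Fin n) : aaa α j * bbb α j = 0 :=
  Nat.mul_eq_zero.mpr (by unfold aaa bbb; omega)

lemma aaa_add_bbb (j : Fin n) : aaa α j + bbb α j = (α j).natAbs := by
  unfold aaa bbb; omega

/-- image exponent -/
noncomputable def ee (α : Fin n → ℤ) (β : Fin n →₀ ℕ) : (Fin n ⊕ Fin n) →₀ ℕ :=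
  ∑ j, (Finsupp.single (Sum.inl j) (β j + aaa α j) + Finsupp.single (Sum.inr j) (β j + bbb α j))

@[simp] lemma ee_apply_inl (β : Fin n →₀ ℕ) (k : Fin n) : ee α β (Sum.inl k) = β k + aaa α k := by
  simp [ee, Finsupp.finset_sum_apply, Finsupp.single_apply, Finset.sum_add_distrib, Finset.sum_ite_eq, Finset.sum_ite_eq']

@[simp] lemma ee_apply_inr (β : Fin n →₀ ℕ) (k : Fin n) : ee α β (Sum.inr k) = β k + bbb α k := by
  simp [ee, Finsupp.finset_sum_apply, Finsupp.single_apply, Finset.sum_add_distrib, Finset.sum_ite_eq, Finset.sum_ite_eq']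

lemma ee_injective : Function.Injective (ee α) := by
  intro x y h
  ext k
  have := congrArg (fun f => f (Sum.inl k)) h
  simpa using this

lemma degree_add' (a b : Fin n →₀ ℕ) : (a + b).degree = a.degree + b.degree := by
  simp [Finsupp.degree_eq_weight_one, map_add]

lemma degree_single' (i : Fin n) (k : ℕ) : (Finsupp.single i k).degree = k := by
  classical
  rcases eq_or_ne k 0 with rfl | hk
  · simp [Finsupp.degree]
  · exact Finsupp.degree_single i k

lemma alphaMap_monomial (β : Fin n →₀ ℕ) (d : ℂ) :
    alphaMap n α (monomial β d) = monomial (ee α β) d := by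
  have h1 : alphaMonomial n α
      = ∏ j : Fin n, monomial (Finsupp.single (Sum.inl j) (aaa α j)
          + Finsupp.single (Sum.inr j) (bbb α j)) (1 : ℂ) := by
    unfold alphaMonomial
    refine Finset.prod_congr rfl fun j _ => ?_
    rw [X_pow_eq_monomial, X_pow_eq_monomial, monomial_mul, mul_one]
    rfl
  have h2 : (aeval (fun j : Fin n => X (Sum.inl j) * X (Sum.inr j)) (monomial β d)
      : MvPolynomial (Fin n ⊕ Fin n) ℂ)
      = C d * ∏ j : Fin n, monomial (Finsupp.single (Sum.inl j) (β j)
          + Finsupp.single (Sum.inr j) (β j)) (1 : ℂ) := by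
    rw [aeval_monomial]
    congr 1
    rw [Finsupp.prod_fintype]
    · refine Finset.prod_congr rfl fun j _ => ?_
      rw [mul_pow, X_pow_eq_monomial, X_pow_eq_monomial, monomial_mul, mul_one]
    · intro j; simp
  show (aeval (fun j : Fin n => X (Sum.inl j) * X (Sum.inr j)) (monomial β d))
      * alphaMonomial n α = _
  rw [h1, h2, mul_assoc, ← Finset.prod_mul_distrib]
  have h3 : ∀ j : Fin n,
      monomial (Finsupp.single (Sum.inl j) (β j) + Finsupp.single (Sum.inr j) (β j)) (1 : ℂ)
      * monomial (Finsupp.single (Sum.inl j) (aaa α j) + Finsupp.single (Sum.inr j) (bbb α j)) (1 : ℂ)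
      = monomial (Finsupp.single (Sum.inl j) (β j + aaa α j)
          + Finsupp.single (Sum.inr j) (β j + bbb α j)) (1 : ℂ) := by
    intro j
    rw [monomial_mul, mul_one]
    congr 1
    rw [Finsupp.single_add, Finsupp.single_add]
    abel
  simp_rw [h3]
  rw [← monomial_sum_one]
  rw [C_mul_monomial, mul_one]
  rfl

/-- abbreviation for natAbs -/
def ccc (α : Fin n → ℤ) (j : Fin n) : ℕ := (α j).natAbs

noncomputable def LL (n : ℕ) (α : Fin n → ℤ) :
    MvPolynomial (Fin n) ℂ →ₗ[ℂ] MvPolynomial (Fin n) ℂ :=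
  ∑ j : Fin n, (LinearMap.mulLeft ℂ (X j) ∘ₗ ((pderiv j).toLinearMap ∘ₗ (pderiv j).toLinearMap)
    + (((ccc α j : ℂ) + 1) • (pderiv j).toLinearMap))

lemma X_mul_monomial' (j : Fin n) (u : Fin n →₀ ℕ) (e : ℂ) :
    X j * monomial u e = monomial (u + Finsupp.single j 1) e := by
  rw [← pow_one (X j), X_pow_eq_monomial, monomial_mul, one_mul, add_comm]

lemma LL_monomial (β : Fin n →₀ ℕ) (d : ℂ) :
    LL n α (monomial β d)
      = ∑ j : Fin n, monomial (β - Finsupp.single j 1)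
          (d * ((β j * (β j + ccc α j) : ℕ) : ℂ)) := by
  rw [LL, LinearMap.sum_apply]
  refine Finset.sum_congr rfl fun j _ => ?_
  simp only [LinearMap.add_apply, LinearMap.comp_apply, LinearMap.mulLeft_apply,
    LinearMap.smul_apply, Derivation.coeFn_coe, pderiv_monomial]
  rcases Nat.eq_zero_or_pos (β j) with h0 | h1
  · simp [h0, Finsupp.single_eq_same]
  have hsj : ((β - Finsupp.single j 1 : Fin n →₀ ℕ)) j = β j - 1 := by
    simp [Finsupp.tsub_apply, Finsupp.single_eq_same]
  rw [hsj, X_mul_monomial', smul_monomial]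
  rcases Nat.lt_or_ge (β j) 2 with h2 | h2
  · have hb1 : β j = 1 := by omega
    have : (β j - 1 : ℕ) = 0 := by omega
    rw [this]
    push_cast
    rw [mul_zero, monomial_zero]
    rw [zero_add]
    congr 1
    rw [hb1, smul_eq_mul]; push_cast; ring
  · have hexp : β - Finsupp.single j 1 - Finsupp.single j 1 + Finsupp.single j 1
        = β - Finsupp.single j 1 := by
      ext k
      rcases eq_or_ne k j with rfl | hk
      · simp [Finsupp.tsub_apply, Finsupp.single_eq_same]; omega
      · simp [Finsupp.tsub_apply, Finsupp.single_apply, Ne.symm hk, hk]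
    rw [hexp, ← map_add]
    congr 1
    have hc : ((β j - 1 : ℕ) : ℂ) = (β j : ℂ) - 1 := by
      push_cast [h1]; ring
    rw [hc, smul_eq_mul]
    push_cast
    ring

lemma lap_monomial (D : (Fin n ⊕ Fin n) →₀ ℕ) (d : ℂ) :
    cxLaplacian n (monomial D d)
      = ∑ j : Fin n, monomial (D - Finsupp.single (Sum.inr j) 1 - Finsupp.single (Sum.inl j) 1)
          (d * ((D (Sum.inr j) * D (Sum.inl j) : ℕ) : ℂ)) := by
  rw [cxLaplacian, LinearMap.sum_apply]
  refine Finset.sum_congr rfl fun j _ => ?_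
  simp only [LinearMap.comp_apply, Derivation.coeFn_coe, pderiv_monomial]
  have h : ((D - Finsupp.single (Sum.inr j) 1 : (Fin n ⊕ Fin n) →₀ ℕ)) (Sum.inl j)
      = D (Sum.inl j) := by
    simp [Finsupp.tsub_apply, Finsupp.single_apply]
  rw [h]
  congr 1
  push_cast
  ring

lemma comm_monomial (β : Fin n →₀ ℕ) (d : ℂ) :
    cxLaplacian n (alphaMap n α (monomial β d)) = alphaMap n α (LL n α (monomial β d)) := by
  rw [alphaMap_monomial, lap_monomial, LL_monomial, map_sum]
  refine Finset.sum_congr rfl fun j _ => ?_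
  rw [alphaMap_monomial]
  simp only [ee_apply_inl, ee_apply_inr]
  rcases Nat.eq_zero_or_pos (β j) with h0 | h1
  · have h2 : bbb α j * aaa α j = 0 := by rw [mul_comm]; exact aaa_mul_bbb j
    simp [h0, h2]
  · have hexp : ee α β - Finsupp.single (Sum.inr j) 1 - Finsupp.single (Sum.inl j) 1
        = ee α (β - Finsupp.single j 1) := by
      ext k
      rcases k with k | k <;> rcases eq_or_ne j k with rfl | hk <;>
        simp_all [Finsupp.tsub_apply, Finsupp.single_apply] <;> omega
    rw [hexp]
    congr 1
    have hc' : ccc α j = aaa α j + bbb α j := (aaa_add_bbb j).symm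
    have hcoef : (β j + bbb α j) * (β j + aaa α j) = β j * (β j + ccc α j) := by
      rw [hc']
      rcases Nat.mul_eq_zero.mp (aaa_mul_bbb (α := α) j) with h | h <;> rw [h] <;> ring
    rw [hcoef]

lemma comm_all (p : MvPolynomial (Fin n) ℂ) :
    cxLaplacian n (alphaMap n α p) = alphaMap n α (LL n α p) := by
  conv_lhs => rw [p.as_sum]
  conv_rhs => rw [p.as_sum]
  rw [map_sum, map_sum, map_sum, map_sum]
  exact Finset.sum_congr rfl fun β _ => comm_monomial β _

lemma coeff_alphaMap (β₀ : Fin n →₀ ℕ) (p : MvPolynomial (Fin n) ℂ) :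
    coeff (ee α β₀) (alphaMap n α p) = coeff β₀ p := by
  conv_lhs => rw [p.as_sum]
  rw [map_sum]
  simp_rw [alphaMap_monomial]
  rw [coeff_sum]
  simp_rw [coeff_monomial]
  have : ∀ β ∈ p.support, (if ee α β = ee α β₀ then coeff β p else 0)
      = if β = β₀ then coeff β p else 0 := by
    intro β _
    simp [ee_injective.eq_iff]
  rw [Finset.sum_congr rfl this, Finset.sum_ite_eq' p.support β₀]
  split
  · rfl
  · exact (MvPolynomial.notMem_support_iff.mp (by assumption)).symm

lemma alphaMap_injective : Function.Injective (alphaMap n α) := by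
  intro p q h
  ext β
  rw [← coeff_alphaMap (α := α) β p, ← coeff_alphaMap (α := α) β q, h]

lemma support_degree {r : ℕ} {p : MvPolynomial (Fin n) ℂ}
    (hp : p ∈ homogeneousSubmodule (Fin n) ℂ r) {β : Fin n →₀ ℕ} (hβ : β ∈ p.support) :
    β.degree = r := by
  by_contra h
  have h2 := ((mem_homogeneousSubmodule r p).mp hp).coeff_eq_zero h
  exact MvPolynomial.mem_support_iff.mp hβ h2

lemma sub_single_add {β : Fin n →₀ ℕ} {j : Fin n} (h : 1 ≤ β j) :
    (β - Finsupp.single j 1) + Finsupp.single j 1 = β := by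
  ext k
  rcases eq_or_ne j k with rfl | hk <;>
    simp_all [Finsupp.tsub_apply, Finsupp.single_apply] <;> omega

lemma degree_sub_single {β : Fin n →₀ ℕ} {j : Fin n} (h : 1 ≤ β j) :
    (β - Finsupp.single j 1).degree + 1 = β.degree := by
  conv_rhs => rw [← sub_single_add h]
  rw [degree_add', degree_single']

def wt (β : Fin n →₀ ℕ) : ℕ := ∑ k : Fin n, (k : ℕ) * β k

lemma wt_add (a b : Fin n →₀ ℕ) : wt (a + b) = wt a + wt b := by
  simp [wt, Finsupp.add_apply, Nat.mul_add, Finset.sum_add_distrib]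

lemma wt_single (j : Fin n) (m : ℕ) : wt (Finsupp.single j m) = (j : ℕ) * m := by
  simp [wt, Finsupp.single_apply, mul_ite, mul_zero, Finset.sum_ite_eq]

lemma wt_sub_single {β : Fin n →₀ ℕ} {j : Fin n} (h : 1 ≤ β j) :
    wt (β - Finsupp.single j 1) + (j : ℕ) = wt β := by
  conv_rhs => rw [← sub_single_add h]
  rw [wt_add, wt_single, mul_one]

lemma LL_mem_homog {r : ℕ} {p : MvPolynomial (Fin n) ℂ}
    (hp : p ∈ homogeneousSubmodule (Fin n) ℂ r) :
    LL n α p ∈ homogeneousSubmodule (Fin n) ℂ (r - 1) := by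
  rw [p.as_sum, map_sum]
  refine Submodule.sum_mem _ fun β hβ => ?_
  rw [LL_monomial]
  refine Submodule.sum_mem _ fun j _ => ?_
  rcases Nat.eq_zero_or_pos (β j) with h0 | h1
  · simp [h0]
  · refine (mem_homogeneousSubmodule _ _).mpr (isHomogeneous_monomial _ ?_)
    have := degree_sub_single h1
    have := support_degree hp hβ
    omega

lemma monomial_mem_image (hn : 1 ≤ n) {r : ℕ} (hr : 1 ≤ r) :
    ∀ (N : ℕ) (β : Fin n →₀ ℕ), wt β = N → β.degree = r - 1 → ∀ c : ℂ,
      monomial β c ∈ Submodule.map (LL n α) (homogeneousSubmodule (Fin n) ℂ r) := by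
  intro N
  induction N using Nat.strong_induction_on with
  | _ N IH =>
    intro β hwt hdeg c
    set S := Submodule.map (LL n α) (homogeneousSubmodule (Fin n) ℂ r) with hS
    set j0 : Fin n := ⟨0, hn⟩ with hj0
    set β' : Fin n →₀ ℕ := β + Finsupp.single j0 1 with hβ'
    have hβ'j0 : β' j0 = β j0 + 1 := by simp [hβ', Finsupp.single_eq_same]
    have hβ'deg : β'.degree = r := by
      rw [hβ', degree_add', degree_single']; omega
    have hmem : LL n α (monomial β' 1) ∈ S := by
      exact ⟨monomial β' 1, (mem_homogeneousSubmodule _ _).mpr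
        (isHomogeneous_monomial _ hβ'deg), rfl⟩
    rw [LL_monomial] at hmem
    rw [← Finset.add_sum_erase _ _ (Finset.mem_univ j0)] at hmem
    have hβ'0 : β' - Finsupp.single j0 1 = β := add_tsub_cancel_right β _
    rw [hβ'0] at hmem
    have hrest : ∑ j ∈ Finset.univ.erase j0,
        monomial (β' - Finsupp.single j 1)
          ((1 : ℂ) * ((β' j * (β' j + ccc α j) : ℕ) : ℂ)) ∈ S := by
      refine Submodule.sum_mem _ fun j hj => ?_
      have hjne : j ≠ j0 := (Finset.mem_erase.mp hj).1
      have hβ'j : β' j = β j := by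
        simp [hβ', Finsupp.single_apply, Ne.symm hjne]
      rcases Nat.eq_zero_or_pos (β j) with h0 | h1
      · simp [hβ'j, h0]
      · have hb1 : 1 ≤ β' j := by omega
        have hdeg2 : (β' - Finsupp.single j 1).degree = r - 1 := by
          have := degree_sub_single hb1
          omega
        have hjpos : 1 ≤ (j : ℕ) := by
          rcases Nat.eq_zero_or_pos (j : ℕ) with h | h
          · exact absurd (Fin.ext h : j = j0) hjne
          · exact h
        have hwt2 : wt (β' - Finsupp.single j 1) < N := by
          have h1' := wt_sub_single hb1
          have h2' : wt β' = wt β := by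
            rw [hβ', wt_add, wt_single]
            simp [hj0]
          omega
        exact IH _ hwt2 _ rfl hdeg2 _
    have hKmem : monomial β ((1 : ℂ) * ((β' j0 * (β' j0 + ccc α j0) : ℕ) : ℂ)) ∈ S := by
      have := Submodule.sub_mem S hmem hrest
      simpa using this
    have hK : ((1 : ℂ) * ((β' j0 * (β' j0 + ccc α j0) : ℕ) : ℂ)) ≠ 0 := by
      rw [one_mul]
      simp only [ne_eq, Nat.cast_eq_zero]
      exact Nat.mul_ne_zero (by omega) (by omega)
    have := Submodule.smul_mem S ((c / ((1 : ℂ) * ((β' j0 * (β' j0 + ccc α j0) : ℕ) : ℂ)))) hKmem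
    rwa [smul_monomial, smul_eq_mul, div_mul_cancel₀ _ hK] at this

lemma surj_LL (hn : 1 ≤ n) {r : ℕ} (hr : 1 ≤ r) :
    homogeneousSubmodule (Fin n) ℂ (r - 1)
      ≤ Submodule.map (LL n α) (homogeneousSubmodule (Fin n) ℂ r) := by
  intro p hp
  rw [p.as_sum]
  refine Submodule.sum_mem _ fun β hβ => ?_
  exact monomial_mem_image hn hr (wt β) β rfl (support_degree hp hβ) _

noncomputable def degSubtypeEquiv (n k : ℕ) :
    {d : Fin n →₀ ℕ // d.degree = k} ≃ Sym (Fin n) k :=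
  (Equiv.subtypeEquivRight (fun d => by
    constructor
    · intro h; rw [← h]; rfl
    · intro h; rw [← h]; rfl)).trans (Sym.equivNatSum (Fin n) k).symm

noncomputable instance (n k : ℕ) : Fintype {d : Fin n →₀ ℕ // d.degree = k} :=
  Fintype.ofEquiv _ (degSubtypeEquiv n k).symm

noncomputable def homogEquiv (n k : ℕ) :
    ↥(homogeneousSubmodule (Fin n) ℂ k) ≃ₗ[ℂ] ({d : Fin n →₀ ℕ // d.degree = k} →₀ ℂ) :=
  (LinearEquiv.ofEq _ _ (homogeneousSubmodule_eq_finsupp_supported (Fin n) ℂ k)).trans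
    (AddMonoidAlgebra.supportedEquivFinsupp _)

instance (n k : ℕ) : FiniteDimensional ℂ ↥(homogeneousSubmodule (Fin n) ℂ k) :=
  LinearEquiv.finiteDimensional (homogEquiv n k).symm

lemma finrank_homog (n k : ℕ) :
    Module.finrank ℂ ↥(homogeneousSubmodule (Fin n) ℂ k) = (n + k - 1).choose k := by
  rw [LinearEquiv.finrank_eq (homogEquiv n k), Module.finrank_finsupp, Module.finrank_self,
    mul_one, Fintype.card_congr (degSubtypeEquiv n k), Sym.card_sym_eq_choose, Fintype.card_fin]

lemma map_LL_homog_zero :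
    Submodule.map (LL n α) (homogeneousSubmodule (Fin n) ℂ 0) = ⊥ := by
  rw [Submodule.eq_bot_iff]
  rintro x ⟨q, hq, rfl⟩
  rw [q.as_sum, map_sum]
  refine Finset.sum_eq_zero fun β hβ => ?_
  have hβ0 : β = 0 := (Finsupp.degree_eq_zero_iff β).mp (support_degree hq hβ)
  subst hβ0
  rw [LL_monomial]
  refine Finset.sum_eq_zero fun j _ => by simp


end DimHarmonicsAux

open DimHarmonicsAux

set_option synthInstance.maxHeartbeats 1000000 in
set_option maxHeartbeats 1000000 in
/-- fix `α ∈ ℤⁿ` and `m` with `m - ‖α‖₁ = 2r ≥ 0`.  The space of harmonic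
polynomials on `ℝ^{2n}` of the form `Q(|z₁|²,…,|zₙ|²)·∏_j z_{σ(j)}^{|α_j|}` with `Q`
homogeneous of degree `r` has dimension `C(r+n-2, n-2)`. -/
theorem dim_harmonics_associated_to_alpha (n r m : ℕ) (hn : 2 ≤ n) (α : Fin n → ℤ)
    (hm : m = 2 * r + ∑ j : Fin n, (α j).natAbs) :
    Module.finrank ℂ
        ↥(Submodule.map (alphaMap n α) (homogeneousSubmodule (Fin n) ℂ r)
            ⊓ LinearMap.ker (cxLaplacian n))
      = (r + n - 2).choose (n - 2) := by
  classical
  set p := homogeneousSubmodule (Fin n) ℂ r with hp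
  have hclaim : Submodule.map (alphaMap n α) p ⊓ LinearMap.ker (cxLaplacian n)
      = Submodule.map (alphaMap n α) (p ⊓ LinearMap.ker (LL n α)) := by
    apply le_antisymm
    · rintro x hx
      obtain ⟨hx1, hx2⟩ := Submodule.mem_inf.mp hx
      obtain ⟨q, hq, rfl⟩ := hx1
      refine ⟨q, Submodule.mem_inf.mpr ⟨hq, ?_⟩, rfl⟩
      rw [LinearMap.mem_ker] at hx2 ⊢
      apply alphaMap_injective (α := α)
      rw [map_zero, ← comm_all, hx2]
    · rintro x ⟨q, hq, rfl⟩
      obtain ⟨hq1, hq2⟩ := Submodule.mem_inf.mp hq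
      refine Submodule.mem_inf.mpr ⟨⟨q, hq1, rfl⟩, ?_⟩
      rw [LinearMap.mem_ker, comm_all, LinearMap.mem_ker.mp hq2, map_zero]
  rw [hclaim]
  rw [← LinearEquiv.finrank_eq
    (Submodule.equivMapOfInjective _ (alphaMap_injective (α := α)) (p ⊓ LinearMap.ker (LL n α)))]
  have hmc : Submodule.map p.subtype (Submodule.comap p.subtype (LinearMap.ker (LL n α)))
      = p ⊓ LinearMap.ker (LL n α) := Submodule.map_comap_subtype _ _
  rw [← hmc, Submodule.finrank_map_subtype_eq]
  rw [← LinearMap.ker_domRestrict p (LL n α)]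
  have hrn := LinearMap.finrank_range_add_finrank_ker ((LL n α).domRestrict p)
  rw [LinearMap.range_domRestrict] at hrn
  have hfp : Module.finrank ℂ ↥p = (n + r - 1).choose r := finrank_homog n r
  rcases Nat.eq_zero_or_pos r with rfl | hr
  · rw [map_LL_homog_zero] at hrn
    simp only [finrank_bot, zero_add] at hrn
    rw [hrn, hfp]
    have h1 : (n + 0 - 1).choose 0 = 1 := Nat.choose_zero_right _
    have h2 : (0 + n - 2).choose (n - 2) = 1 := by
      rw [show 0 + n - 2 = n - 2 by omega]; exact Nat.choose_self _
    omega
  · have hmap : Submodule.map (LL n α) p = homogeneousSubmodule (Fin n) ℂ (r - 1) := by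
      apply le_antisymm
      · rintro x ⟨q, hq, rfl⟩
        exact LL_mem_homog hq
      · exact surj_LL (by omega) hr
    rw [hmap, finrank_homog] at hrn
    have pascal : (n + r - 2).choose (r - 1) + (n + r - 2).choose r = (n + r - 1).choose r := by
      have h1 : n + r - 1 = (n + r - 2) + 1 := by omega
      have h2 : r = (r - 1) + 1 := by omega
      conv_rhs => rw [h1, h2]
      rw [Nat.choose_succ_succ', ← h2]
    have hsymm : (n + r - 2).choose (n - 2) = (n + r - 2).choose r := by
      have : n - 2 = (n + r - 2) - r := by omega
      rw [this, Nat.choose_symm (by omega)]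
    have h3 : n + (r - 1) - 1 = n + r - 2 := by omega
    rw [h3] at hrn
    rw [hfp] at hrn
    rw [show r + n - 2 = n + r - 2 by omega]
    omega
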